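/- Let a < b be real numbers and let X be a random variable taking values in [a,b] with mean μ satisfying l ≤ μ ≤ u, where a ≤ l ≤ u ≤ b. If u ≤ (a+b)/2, then for every s ≥ 0, E[exp(s(μ−X))] ≤ exp(s² (u−a)(b−u) / 2). -/

import Mathlib

open Real

lemma mgf_key (a b μ : ℝ) (hab : a < b) (haμ : a ≤ μ) (hμ : 2*μ ≤ a+b)
    (s : ℝ) (hs : 0 ≤ s) :
    (b-μ) * Real.exp (s*(μ-a)) + (μ-a) * Real.exp (s*(μ-b)) ≤
      (b-a) * Real.exp ((b-μ)*(μ-a)*s^2/2) := by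
  set p := b - μ with hp_def
  set q := μ - a with hq_def
  have hp : 0 < p := by simp only [hp_def]; linarith
  have hq : 0 ≤ q := by simp only [hq_def]; linarith
  have hqp : q ≤ p := by simp only [hp_def, hq_def]; linarith
  have hpq : p + q = b - a := by simp only [hp_def, hq_def]; ring
  have hpqpos : 0 < p + q := by linarith
  set v := p * q with hv_def
  set D : ℝ → ℝ := fun t => p * Real.exp (-(t*a)) + q * Real.exp (-(t*b)) with hD_def
  have hDpos : ∀ t, 0 < D t := fun t =>
    add_pos_of_pos_of_nonneg (mul_pos hp (Real.exp_pos _))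
      (mul_nonneg hq (Real.exp_pos _).le)
  set Dd : ℝ → ℝ := fun t => p * (Real.exp (-(t*a)) * -a) + q * (Real.exp (-(t*b)) * -b)
    with hDd_def
  set Dd2 : ℝ → ℝ := fun t => p * (Real.exp (-(t*a)) * -a * -a) + q * (Real.exp (-(t*b)) * -b * -b)
    with hDd2_def
  have hexp1 : ∀ t : ℝ, HasDerivAt (fun t : ℝ => Real.exp (-(t*a))) (Real.exp (-(t*a)) * -a) t := by
    intro t
    have := (((hasDerivAt_id t).mul_const a).neg).exp
    simpa using this
  have hexp2 : ∀ t : ℝ, HasDerivAt (fun t : ℝ => Real.exp (-(t*b))) (Real.exp (-(t*b)) * -b) t := by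
    intro t
    have := (((hasDerivAt_id t).mul_const b).neg).exp
    simpa using this
  have hD : ∀ t, HasDerivAt D (Dd t) t := fun t =>
    (((hexp1 t).const_mul p).add ((hexp2 t).const_mul q))
  have hDd : ∀ t, HasDerivAt Dd (Dd2 t) t := fun t =>
    ((((hexp1 t).mul_const (-a)).const_mul p).add (((hexp2 t).mul_const (-b)).const_mul q))
  set G : ℝ → ℝ := fun t => v*t^2/2 + Real.log (b-a) - t*μ - Real.log (D t) with hG_def
  set G1 : ℝ → ℝ := fun t => v*t - μ - Dd t / D t with hG1_def
  set G2 : ℝ → ℝ := fun t => v - (Dd2 t * D t - Dd t * Dd t) / (D t)^2 with hG2_def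
  have hG : ∀ t, HasDerivAt G (G1 t) t := by
    intro t
    have h1 : HasDerivAt (fun t : ℝ => v*t^2/2) (v*t) t := by
      have := ((hasDerivAt_pow 2 t).const_mul v).div_const 2
      refine this.congr_deriv ?_
      ring
    have hlog : HasDerivAt (fun t => Real.log (D t)) (Dd t / D t) t :=
      (hD t).log (hDpos t).ne'
    have := ((h1.add_const (Real.log (b-a))).sub ((hasDerivAt_id t).mul_const μ)).sub hlog
    refine this.congr_deriv ?_
    ring
  have hG1 : ∀ t, HasDerivAt G1 (G2 t) t := by
    intro t
    have hdiv : HasDerivAt (fun t => Dd t / D t)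
        ((Dd2 t * D t - Dd t * Dd t) / (D t)^2) t :=
      (hDd t).div (hD t) (hDpos t).ne'
    have := (((hasDerivAt_id t).const_mul v).sub_const μ).sub hdiv
    refine this.congr_deriv ?_
    ring
  have hEle : ∀ t : ℝ, 0 ≤ t → Real.exp (-(t*b)) ≤ Real.exp (-(t*a)) := by
    intro t ht
    apply Real.exp_le_exp.2
    nlinarith
  have hG2nonneg : ∀ t : ℝ, 0 ≤ t → 0 ≤ G2 t := by
    intro t ht
    have hN : Dd2 t * D t - Dd t * Dd t
        = p*q*(b-a)^2 * (Real.exp (-(t*a)) * Real.exp (-(t*b))) := by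
      simp only [hDd2_def, hDd_def, hD_def, ← hpq]
      ring
    have hE1 := Real.exp_pos (-(t*a))
    have hE2 := Real.exp_pos (-(t*b))
    have hE := hEle t ht
    have hDsq : (b-a)^2 * (Real.exp (-(t*a)) * Real.exp (-(t*b))) ≤ (D t)^2 := by
      rw [← hpq]
      simp only [hD_def]
      have h1 : q^2 * Real.exp (-(t*b)) ≤ q^2 * Real.exp (-(t*a)) :=
        mul_le_mul_of_nonneg_left hE (sq_nonneg q)
      have h2 : q^2 * Real.exp (-(t*a)) ≤ p^2 * Real.exp (-(t*a)) :=
        mul_le_mul_of_nonneg_right (by nlinarith) hE1.le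
      nlinarith [mul_nonneg (sub_nonneg.2 hE) (sub_nonneg.2 (h1.trans h2))]
    have hDsqpos : 0 < (D t)^2 := pow_pos (hDpos t) 2
    simp only [hG2_def, hN, hv_def]
    rw [sub_nonneg, div_le_iff₀ hDsqpos]
    nlinarith [mul_le_mul_of_nonneg_left hDsq (mul_nonneg hp.le hq)]
  have hcont1 : ContinuousOn G1 (Set.Ici (0:ℝ)) :=
    fun x _ => (hG1 x).continuousAt.continuousWithinAt
  have hmono1 : MonotoneOn G1 (Set.Ici (0:ℝ)) := by
    apply monotoneOn_of_deriv_nonneg (convex_Ici 0) hcont1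
    · intro x hx
      exact (hG1 x).differentiableAt.differentiableWithinAt
    · intro x hx
      rw [interior_Ici] at hx
      rw [(hG1 x).deriv]
      exact hG2nonneg x (le_of_lt hx)
  have hG1zero : G1 0 = 0 := by
    have hμeq : p * a + q * b = μ * (p + q) := by
      simp only [hp_def, hq_def]; ring
    simp only [hG1_def, hD_def, hDd_def]
    norm_num
    have hdiv : (-(p * a) + -(q * b)) / (p + q) = -μ := by
      rw [div_eq_iff hpqpos.ne']
      linear_combination (-1 : ℝ) * hμeq
    rw [hdiv]
    ring
  have hG1nonneg : ∀ t : ℝ, 0 ≤ t → 0 ≤ G1 t := by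
    intro t ht
    have := hmono1 (Set.self_mem_Ici) (Set.mem_Ici.2 ht) ht
    linarith [hG1zero ▸ this]
  have hcont : ContinuousOn G (Set.Ici (0:ℝ)) :=
    fun x _ => (hG x).continuousAt.continuousWithinAt
  have hmono : MonotoneOn G (Set.Ici (0:ℝ)) := by
    apply monotoneOn_of_deriv_nonneg (convex_Ici 0) hcont
    · intro x hx
      exact (hG x).differentiableAt.differentiableWithinAt
    · intro x hx
      rw [interior_Ici] at hx
      rw [(hG x).deriv]
      exact hG1nonneg x (le_of_lt hx)
  have hGzero : G 0 = 0 := by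
    simp only [hG_def, hD_def]
    norm_num
    rw [hpq]
    ring
  have hGs : 0 ≤ G s := by
    have := hmono (Set.self_mem_Ici) (Set.mem_Ici.2 hs) hs
    linarith [hGzero ▸ this]
  -- now convert
  have hkey : s*μ + Real.log (D s) ≤ v*s^2/2 + Real.log (b-a) := by
    simp only [hG_def] at hGs
    linarith
  have lhs_eq : (b-μ) * Real.exp (s*(μ-a)) + (μ-a) * Real.exp (s*(μ-b))
      = Real.exp (s*μ + Real.log (D s)) := by
    rw [Real.exp_add, Real.exp_log (hDpos s)]
    simp only [hD_def]
    rw [show s*(μ-a) = s*μ + -(s*a) by ring, show s*(μ-b) = s*μ + -(s*b) by ring,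
      Real.exp_add, Real.exp_add]
    ring
  have rhs_eq : (b-a) * Real.exp ((b-μ)*(μ-a)*s^2/2)
      = Real.exp (v*s^2/2 + Real.log (b-a)) := by
    rw [Real.exp_add, Real.exp_log (by linarith : (0:ℝ) < b - a)]
    simp only [hv_def, hp_def, hq_def]
    ring
  rw [lhs_eq, rhs_eq]
  exact Real.exp_le_exp.2 hkey
open MeasureTheory

/-- MGF bound for the negated deviation of a bounded random variable whose mean
upper bound satisfies `u ≤ (a+b)/2`. -/
theorem mgf_bound_low_upper_bound
    {Ω : Type*} [MeasurableSpace Ω] (P : Measure Ω) [IsProbabilityMeasure P]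
    (a b l u μ : ℝ) (hab : a < b) (hal : a ≤ l) (hlu : l ≤ u) (hub : u ≤ b)
    (hu : u ≤ (a + b) / 2)
    (X : Ω → ℝ) (hmeas : Measurable X)
    (hbdd : ∀ᵐ ω ∂P, X ω ∈ Set.Icc a b)
    (hmean : ∫ ω, X ω ∂P = μ)
    (hlμ : l ≤ μ) (hμu : μ ≤ u)
    (s : ℝ) (hs : 0 ≤ s) :
    ∫ ω, Real.exp (s * (μ - X ω)) ∂P ≤ Real.exp (s ^ 2 * (u - a) * (b - u) / 2) := by
  have hba : (0:ℝ) < b - a := by linarith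
  have haμ : a ≤ μ := hal.trans hlμ
  have hμ2 : 2*μ ≤ a + b := by linarith
  set c1 := Real.exp (s*(μ-a)) with hc1
  set c2 := Real.exp (s*(μ-b)) with hc2
  -- integrability of X
  have hXint : Integrable X P := by
    refine ⟨hmeas.aestronglyMeasurable, ?_⟩
    apply MeasureTheory.HasFiniteIntegral.of_bounded (C := max |a| |b|)
    filter_upwards [hbdd] with ω hω
    exact abs_le_max_abs_abs hω.1 hω.2
  -- integrability of exp
  have hYmeas : Measurable (fun ω => Real.exp (s * (μ - X ω))) :=
    Real.measurable_exp.comp ((measurable_const.sub hmeas).const_mul s)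
  have hYint : Integrable (fun ω => Real.exp (s * (μ - X ω))) P := by
    refine ⟨hYmeas.aestronglyMeasurable, ?_⟩
    apply MeasureTheory.HasFiniteIntegral.of_bounded (C := c1)
    filter_upwards [hbdd] with ω hω
    rw [Real.norm_eq_abs, abs_of_pos (Real.exp_pos _)]
    apply Real.exp_le_exp.2
    have : μ - X ω ≤ μ - a := by linarith [hω.1]
    exact mul_le_mul_of_nonneg_left this hs
  -- the linear dominating function
  set g : Ω → ℝ := fun ω => ((b - X ω) * c1 + (X ω - a) * c2) / (b - a) with hg
  have hi1 : Integrable (fun ω => (b - X ω) * c1) P :=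
    ((integrable_const b).sub hXint).mul_const c1
  have hi2 : Integrable (fun ω => (X ω - a) * c2) P :=
    (hXint.sub (integrable_const a)).mul_const c2
  have hgint : Integrable g P := (hi1.add hi2).div_const (b - a)
  -- pointwise bound from convexity of exp
  have hptwise : ∀ᵐ ω ∂P, Real.exp (s * (μ - X ω)) ≤ g ω := by
    filter_upwards [hbdd] with ω hω
    set x := X ω with hx
    have hl1 : (0:ℝ) ≤ (b - x)/(b - a) := by
      apply div_nonneg _ hba.le; linarith [hω.2]
    have hl2 : (0:ℝ) ≤ (x - a)/(b - a) := by
      apply div_nonneg _ hba.le; linarith [hω.1]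
    have hlsum : (b - x)/(b - a) + (x - a)/(b - a) = 1 := by
      field_simp
      ring
    have hconv := convexOn_exp.2 (Set.mem_univ (s*(μ-a))) (Set.mem_univ (s*(μ-b)))
      hl1 hl2 hlsum
    simp only [smul_eq_mul] at hconv
    have harg : (b - x)/(b - a) * (s*(μ-a)) + (x - a)/(b - a) * (s*(μ-b))
        = s * (μ - x) := by
      field_simp
      ring
    rw [harg] at hconv
    calc Real.exp (s * (μ - x)) ≤ (b - x)/(b - a) * Real.exp (s*(μ-a))
          + (x - a)/(b - a) * Real.exp (s*(μ-b)) := hconv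
      _ = g ω := by
          simp only [hg, ← hx, ← hc1, ← hc2]
          field_simp
  have hint_le : ∫ ω, Real.exp (s * (μ - X ω)) ∂P ≤ ∫ ω, g ω ∂P :=
    integral_mono_ae hYint hgint hptwise
  have hgval : ∫ ω, g ω ∂P = ((b - μ) * c1 + (μ - a) * c2) / (b - a) := by
    simp only [hg]
    rw [integral_div, integral_add hi1 hi2, integral_mul_const,
      integral_mul_const, integral_sub (integrable_const b) hXint,
      integral_sub hXint (integrable_const a), hmean, integral_const]
    simp
  have hkey := mgf_key a b μ hab haμ hμ2 s hs
  have step2 : ((b - μ) * c1 + (μ - a) * c2) / (b - a)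
      ≤ Real.exp ((b-μ)*(μ-a)*s^2/2) := by
    rw [div_le_iff₀ hba]
    calc (b - μ) * c1 + (μ - a) * c2 ≤ (b-a) * Real.exp ((b-μ)*(μ-a)*s^2/2) := hkey
      _ = Real.exp ((b-μ)*(μ-a)*s^2/2) * (b - a) := by ring
  have step3 : Real.exp ((b-μ)*(μ-a)*s^2/2) ≤ Real.exp (s ^ 2 * (u - a) * (b - u) / 2) := by
    apply Real.exp_le_exp.2
    have h1 : (0:ℝ) ≤ u - μ := by linarith
    have h2 : (0:ℝ) ≤ a + b - u - μ := by linarith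
    nlinarith [sq_nonneg s, mul_nonneg h1 h2, mul_nonneg (mul_nonneg h1 h2) (sq_nonneg s)]
  calc ∫ ω, Real.exp (s * (μ - X ω)) ∂P ≤ ∫ ω, g ω ∂P := hint_le
    _ = ((b - μ) * c1 + (μ - a) * c2) / (b - a) := hgval
    _ ≤ Real.exp ((b-μ)*(μ-a)*s^2/2) := step2
    _ ≤ Real.exp (s ^ 2 * (u - a) * (b - u) / 2) := step3
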